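/- For every potential b : ℕ → ℝ and every T ≥ 1, the connecting matrix C^T with entries C^T_{ij} = Σ_{k=0}^{T−max(i,j)} r_{|i−j|+2k} (r the response vector of b) is symmetric and positive definite, and moreover det C^l = 1 for every 1 ≤ l ≤ T, where C^l is the l×l matrix with entries C^l_{ij} = Σ_{k=0}^{l−max(i,j)} r_{|i−j|+2k}. -/

import Mathlib

/-- `sol b f t n` is the solution `u^f_{n,t}` of the discrete Schrödinger dynamical system
with potential `b` and boundary control `f`:
`u_{n,t+1} + u_{n,t-1} - u_{n+1,t} - u_{n-1,t} + b_n u_{n,t} = 0` for `n ≥ 1`, `t ≥ 0`,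
`u_{n,-1} = u_{n,0} = 0` for `n ≥ 1`, and `u_{0,t} = f_t` for `t ≥ 0`
(the first argument is the time `t`, the second the space variable `n`). -/
noncomputable def sol (b f : ℕ → ℝ) : ℕ → ℕ → ℝ
  | 0, n => if n = 0 then f 0 else 0
  | 1, n => if n = 0 then f 1 else
      sol b f 0 (n + 1) + sol b f 0 (n - 1) - b n * sol b f 0 n
  | (t + 2), n => if n = 0 then f (t + 2) else
      sol b f (t + 1) (n + 1) + sol b f (t + 1) (n - 1) - b n * sol b f (t + 1) n - sol b f t n

/-- The delta control: `δ_0 = 1`, `δ_t = 0` for `t ≥ 1`. -/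
noncomputable def delta : ℕ → ℝ := fun t => if t = 0 then 1 else 0

/-- The response vector of the potential `b`: `r_s = u^δ_{1,s+1}`. -/
noncomputable def resp (b : ℕ → ℝ) (s : ℕ) : ℝ := sol b delta (s + 1) 1

/-- The entries of the connecting matrix: `Cmat r T i j = Σ_{k=0}^{T - max i j} r_{|i-j| + 2k}`
(`i`, `j` are 1-based indices). -/
noncomputable def Cmat (r : ℕ → ℝ) (T i j : ℕ) : ℝ :=
  ∑ k ∈ Finset.range (T - max i j + 1), r (max i j - min i j + 2 * k)

namespace ConnAux

open Matrix

variable (b : ℕ → ℝ)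

/-- abbreviation for the delta-controlled wave. -/
noncomputable def w (t n : ℕ) : ℝ := sol b delta t n

lemma w_zero (n : ℕ) (hn : n ≠ 0) : w b 0 n = 0 := by
  simp [w, sol, hn]

lemma w_boundary (t : ℕ) : w b t 0 = delta t := by
  match t with
  | 0 => simp [w, sol, delta]
  | 1 => simp [w, sol, delta]
  | (t+2) => simp [w, sol, delta]

lemma w_one (n : ℕ) (hn : n ≠ 0) :
    w b 1 n = w b 0 (n + 1) + w b 0 (n - 1) - b n * w b 0 n := by
  rw [w, sol]
  simp [hn, w]

lemma w_rec (t n : ℕ) (hn : n ≠ 0) :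
    w b (t + 2) n = w b (t + 1) (n + 1) + w b (t + 1) (n - 1)
      - b n * w b (t + 1) n - w b t n := by
  rw [w, sol]
  simp [hn, w]

/-- finite propagation speed -/
lemma w_speed : ∀ t n : ℕ, t < n → w b t n = 0 := by
  intro t
  induction t using Nat.strong_induction_on with
  | _ t ih =>
    match t with
    | 0 => intro n hn; exact w_zero b n (by omega)
    | 1 =>
      intro n hn
      rw [w_one b n (by omega), w_zero b (n+1) (by omega), w_zero b n (by omega),
        w_zero b (n-1) (by omega)]
      ring
    | (t+2) =>
      intro n hn
      rw [w_rec b t n (by omega), ih (t+1) (by omega) (n+1) (by omega),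
        ih (t+1) (by omega) (n-1) (by omega), ih (t+1) (by omega) n (by omega),
        ih t (by omega) n (by omega)]
      ring

lemma w_diag : ∀ n : ℕ, w b n n = 1 := by
  intro n
  induction n using Nat.strong_induction_on with
  | _ n ih =>
    match n with
    | 0 => simp [w, sol, delta]
    | 1 =>
      rw [w_one b 1 (by omega), w_zero b 2 (by omega)]
      simp [w, sol, delta]
    | (n+2) =>
      rw [w_rec b n (n+2) (by omega), w_speed b (n+1) (n+3) (by omega),
        w_speed b (n+1) (n+2) (by omega), w_speed b n (n+2) (by omega)]
      simp [ih (n+1) (by omega)]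

/-- The quadratic quantity `G N τ σ = Σ_{n=1}^{N} w_{n,τ} w_{n,σ}`. -/
noncomputable def G (N τ σ : ℕ) : ℝ := ∑ n ∈ Finset.range N, w b τ (n+1) * w b σ (n+1)

lemma G_stab (τ σ N M : ℕ) (hN : τ ≤ N) (hM : τ ≤ M) : G b N τ σ = G b M τ σ := by
  have key : ∀ K : ℕ, τ ≤ K → G b K τ σ = G b τ τ σ := by
    intro K hK
    rw [G, G]
    refine (Finset.sum_subset (Finset.range_subset_range.2 hK) ?_).symm
    intro n _ hn
    rw [w_speed b τ (n+1) (by simp at hn; omega)]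
    ring
  rw [key N hN, key M hM]

/-- the Blagoveshchenskii-type recursion for `G`. -/
lemma G_rec (t s N : ℕ) (ht : t + 1 < N) (hs : s + 1 < N) :
    G b N (t+2) (s+1) + G b N t (s+1) = G b N (t+1) (s+2) + G b N (t+1) s := by
  classical
  set u : ℕ → ℝ := fun n => w b (t+1) n with hu
  set v : ℕ → ℝ := fun n => w b (s+1) n with hv
  have e1 : G b N (t+2) (s+1) + G b N t (s+1)
      = ∑ n ∈ Finset.range N, (u (n+2) + u n - b (n+1) * u (n+1)) * v (n+1) := by
    rw [G, G, ← Finset.sum_add_distrib]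
    refine Finset.sum_congr rfl fun n _ => ?_
    rw [w_rec b t (n+1) (by omega)]
    simp only [hu, hv, Nat.add_sub_cancel]
    ring
  have e2 : G b N (t+1) (s+2) + G b N (t+1) s
      = ∑ n ∈ Finset.range N, (v (n+2) + v n - b (n+1) * v (n+1)) * u (n+1) := by
    rw [G, G, ← Finset.sum_add_distrib]
    refine Finset.sum_congr rfl fun n _ => ?_
    rw [w_rec b s (n+1) (by omega)]
    simp only [hu, hv, Nat.add_sub_cancel]
    ring
  have e3 : (∑ n ∈ Finset.range N, (u (n+2) + u n - b (n+1) * u (n+1)) * v (n+1))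
      - (∑ n ∈ Finset.range N, (v (n+2) + v n - b (n+1) * v (n+1)) * u (n+1))
      = ∑ n ∈ Finset.range N,
        ((fun m => u (m+1) * v m - u m * v (m+1)) (n+1)
          - (fun m => u (m+1) * v m - u m * v (m+1)) n) := by
    rw [← Finset.sum_sub_distrib]
    refine Finset.sum_congr rfl fun n _ => ?_
    simp only
    ring
  rw [Finset.sum_range_sub (fun m => u (m+1) * v m - u m * v (m+1)) N] at e3
  have hu0 : u 0 = 0 := by rw [hu]; simpa [delta] using w_boundary b (t+1)
  have hv0 : v 0 = 0 := by rw [hv]; simpa [delta] using w_boundary b (s+1)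
  have huN : u (N+1) = 0 := w_speed b (t+1) (N+1) (by omega)
  have huN' : u N = 0 := w_speed b (t+1) N (by omega)
  rw [hu0, hv0, huN, huN'] at e3
  simp only [mul_zero, zero_mul, sub_zero, zero_sub, sub_self, neg_zero] at e3
  linarith [e1, e2, e3]

/-- `Fo a d = Σ_{k<a} r_{d+2k}`. -/
noncomputable def Fo (a d : ℕ) : ℝ := ∑ k ∈ Finset.range a, resp b (d + 2 * k)

lemma Fo_succ (a d : ℕ) : Fo b (a+1) d = Fo b a d + resp b (d + 2*a) :=
  Finset.sum_range_succ _ a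

/-- `F τ σ = Σ_{k < min τ σ} r_{|τ-σ|+2k}`. -/
noncomputable def F (τ σ : ℕ) : ℝ := Fo b (min τ σ) (max τ σ - min τ σ)

lemma F_eq (τ σ a d : ℕ) (h1 : min τ σ = a) (h2 : max τ σ - min τ σ = d) :
    F b τ σ = Fo b a d := by
  rw [F, ← h2, ← h1]

lemma F_rec (t s : ℕ) :
    F b (t+2) (s+1) + F b t (s+1) = F b (t+1) (s+2) + F b (t+1) s := by
  rcases lt_trichotomy t s with h | h | h
  · -- s ≥ t+1
    have h1 : F b (t+2) (s+1) = Fo b (t+2) (s-t-1) := F_eq b _ _ _ _ (by omega) (by omega)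
    have h2 : F b t (s+1) = Fo b t (s-t+1) := F_eq b _ _ _ _ (by omega) (by omega)
    have h3 : F b (t+1) (s+2) = Fo b (t+1) (s-t+1) := F_eq b _ _ _ _ (by omega) (by omega)
    have h4 : F b (t+1) s = Fo b (t+1) (s-t-1) := F_eq b _ _ _ _ (by omega) (by omega)
    rw [h1, h2, h3, h4, Fo_succ b (t+1) (s-t-1), Fo_succ b t (s-t+1)]
    have he : s-t-1 + 2*(t+1) = s-t+1 + 2*t := by omega
    rw [he]; ring
  · -- s = t
    subst h
    have h1 : F b (t+2) (t+1) = Fo b (t+1) 1 := F_eq b _ _ _ _ (by omega) (by omega)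
    have h2 : F b t (t+1) = Fo b t 1 := F_eq b _ _ _ _ (by omega) (by omega)
    have h3 : F b (t+1) (t+2) = Fo b (t+1) 1 := F_eq b _ _ _ _ (by omega) (by omega)
    have h4 : F b (t+1) t = Fo b t 1 := F_eq b (t+1) t t 1 (by omega) (by omega)
    rw [h1, h2, h3, h4]
  · -- t ≥ s+1
    have h1 : F b (t+2) (s+1) = Fo b (s+1) (t-s+1) := F_eq b _ _ _ _ (by omega) (by omega)
    have h2 : F b t (s+1) = Fo b (s+1) (t-s-1) := F_eq b _ _ _ _ (by omega) (by omega)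
    have h3 : F b (t+1) (s+2) = Fo b (s+2) (t-s-1) := F_eq b _ _ _ _ (by omega) (by omega)
    have h4 : F b (t+1) s = Fo b s (t-s+1) := F_eq b _ _ _ _ (by omega) (by omega)
    rw [h1, h2, h3, h4, Fo_succ b (s+1) (t-s-1), Fo_succ b s (t-s+1)]
    have he : t-s-1 + 2*(s+1) = t-s+1 + 2*s := by omega
    rw [he]; ring

/-- The main identity: `G N τ σ = F τ σ`. -/
lemma G_eq_F : ∀ τ σ N : ℕ, τ < N → G b N τ σ = F b τ σ := by
  intro τ
  induction τ using Nat.strong_induction_on with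
  | _ τ ih =>
    match τ with
    | 0 =>
      intro σ N _
      have : G b N 0 σ = 0 := by
        rw [G]
        refine Finset.sum_eq_zero fun n _ => ?_
        rw [w_zero b (n+1) (by omega)]; ring
      rw [this, F]
      simp [Fo]
    | 1 =>
      intro σ N hN
      have hG : G b N 1 σ = w b σ 1 := by
        rw [G]
        rw [Finset.sum_eq_single_of_mem 0 (Finset.mem_range.2 (by omega))]
        · rw [show (0:ℕ)+1 = 1 from rfl, w_diag b 1]; ring
        · intro n _ hn
          rw [w_speed b 1 (n+1) (by omega)]; ring
      rw [hG]
      match σ with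
      | 0 =>
        rw [show w b 0 1 = 0 from w_zero b 1 (by omega), F]
        simp [Fo]
      | (s+1) =>
        have hF : F b 1 (s+1) = Fo b 1 s := F_eq b _ _ _ _ (by omega) (by omega)
        rw [hF, Fo]
        simp [resp, w]
    | (t+2) =>
      intro σ N hN
      match σ with
      | 0 =>
        have : G b N (t+2) 0 = 0 := by
          rw [G]
          refine Finset.sum_eq_zero fun n _ => ?_
          rw [w_zero b (n+1) (by omega)]; ring
        rw [this, F]
        simp [Fo]
      | (s+1) =>
        set N' := t + s + 4 with hN'
        have hstab : G b N (t+2) (s+1) = G b N' (t+2) (s+1) :=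
          G_stab b (t+2) (s+1) N N' (by omega) (by omega)
        have hrec := G_rec b t s N' (by omega) (by omega)
        have i1 : G b N' t (s+1) = F b t (s+1) := ih t (by omega) (s+1) N' (by omega)
        have i2 : G b N' (t+1) (s+2) = F b (t+1) (s+2) := ih (t+1) (by omega) (s+2) N' (by omega)
        have i3 : G b N' (t+1) s = F b (t+1) s := ih (t+1) (by omega) s N' (by omega)
        have hF := F_rec b t s
        rw [hstab]
        linarith [hrec, i1, i2, i3, hF]

/-- The triangular wave matrix `A i j = w_{j+1, i+1}`. -/
noncomputable def A (T : ℕ) : Matrix (Fin T) (Fin T) ℝ :=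
  Matrix.of fun i j : Fin T => w b ((i:ℕ)+1) ((j:ℕ)+1)

lemma A_det (T : ℕ) : (A b T).det = 1 := by
  have htri : (A b T).BlockTriangular OrderDual.toDual := by
    intro i j hij
    have hij' : (i:ℕ) < (j:ℕ) := hij
    exact w_speed b ((i:ℕ)+1) ((j:ℕ)+1) (by omega)
  rw [Matrix.det_of_lowerTriangular _ htri]
  refine Finset.prod_eq_one fun i _ => ?_
  simpa [A] using w_diag b ((i:ℕ)+1)

lemma N_entry (T : ℕ) (i j : Fin T) :
    (A b T * (A b T)ᵀ) i j = F b ((i:ℕ)+1) ((j:ℕ)+1) := by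
  have : (A b T * (A b T)ᵀ) i j
      = ∑ n : Fin T, w b ((i:ℕ)+1) ((n:ℕ)+1) * w b ((j:ℕ)+1) ((n:ℕ)+1) := by
    simp [Matrix.mul_apply, A, Matrix.transpose_apply]
  rw [this, ← G_eq_F b ((i:ℕ)+1) ((j:ℕ)+1) (T+1) (by omega),
    show G b (T+1) ((i:ℕ)+1) ((j:ℕ)+1) = G b T ((i:ℕ)+1) ((j:ℕ)+1) from
      G_stab b _ _ _ _ (by omega) (by omega), G, Finset.sum_range]

lemma posDef_N (T : ℕ) : (A b T * (A b T)ᵀ).PosDef := by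
  rw [Matrix.posDef_iff_dotProduct_mulVec]
  constructor
  · rw [Matrix.IsHermitian]
    ext i j
    simp [Matrix.conjTranspose_apply, Matrix.mul_apply, Matrix.transpose_apply, mul_comm]
  · intro x hx
    have hdet : IsUnit (A b T)ᵀ := by
      rw [Matrix.isUnit_iff_isUnit_det, Matrix.det_transpose, A_det b T]
      exact isUnit_one
    have hinj : Function.Injective ((A b T)ᵀ).mulVec :=
      Matrix.mulVec_injective_iff_isUnit.2 hdet
    have hy : (A b T)ᵀ *ᵥ x ≠ 0 := fun h =>
      hx (hinj (a₁ := x) (a₂ := 0) (by simpa using h))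
    have key : star x ⬝ᵥ ((A b T * (A b T)ᵀ) *ᵥ x)
        = star ((A b T)ᵀ *ᵥ x) ⬝ᵥ ((A b T)ᵀ *ᵥ x) := by
      rw [← Matrix.mulVec_mulVec, Matrix.dotProduct_mulVec]
      simp only [star_trivial]
      congr 1
      exact (Matrix.mulVec_transpose (A b T) x).symm
    rw [key]
    exact Matrix.dotProduct_star_self_pos_iff.2 hy

lemma posDef_submatrix {T : ℕ} {M : Matrix (Fin T) (Fin T) ℝ} (h : M.PosDef)
    (e : Fin T ≃ Fin T) : (M.submatrix e e).PosDef := by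
  refine Matrix.posDef_iff_dotProduct_mulVec.2 ⟨h.1.submatrix e, fun x hx => ?_⟩
  set y : Fin T → ℝ := x ∘ ⇑e.symm with hy
  have hx' : y ≠ 0 := fun h0 =>
    hx (by funext i; simpa [hy] using congrFun h0 (e i))
  have h1 : M.submatrix (⇑e) (⇑e) *ᵥ x = (M *ᵥ y) ∘ ⇑e :=
    Matrix.submatrix_mulVec_equiv M x e e
  have h2 : star x ⬝ᵥ ((M *ᵥ y) ∘ ⇑e) = star y ⬝ᵥ (M *ᵥ y) := by
    simp only [star_trivial]
    conv_lhs => rw [show x = y ∘ ⇑e by funext i; simp [hy]]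
    exact comp_equiv_dotProduct_comp_equiv _ _ _
  rw [h1, h2]
  simpa using (Matrix.posDef_iff_dotProduct_mulVec.1 h).2 hx'

/-- connecting matrix at level `T` equals a reindexing of `A * Aᵀ`. -/
lemma M_eq (T : ℕ) :
    (Matrix.of fun i j : Fin T => Cmat (resp b) T ((i : ℕ) + 1) ((j : ℕ) + 1))
      = (A b T * (A b T)ᵀ).submatrix Fin.revPerm Fin.revPerm := by
  ext i j
  rw [Matrix.submatrix_apply]
  rw [N_entry b T (Fin.revPerm i) (Fin.revPerm j)]
  have hiT : (i:ℕ) < T := i.isLt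
  have hjT : (j:ℕ) < T := j.isLt
  have hi : ((Fin.revPerm i : Fin T) : ℕ) + 1 = T - (i:ℕ) := by
    have : ((Fin.revPerm i : Fin T) : ℕ) = T - ((i:ℕ)+1) := rfl
    omega
  have hj : ((Fin.revPerm j : Fin T) : ℕ) + 1 = T - (j:ℕ) := by
    have : ((Fin.revPerm j : Fin T) : ℕ) = T - ((j:ℕ)+1) := rfl
    omega
  rw [hi, hj]
  rw [Matrix.of_apply, Cmat, F]
  have h1 : T - max ((i:ℕ)+1) ((j:ℕ)+1) + 1 = min (T - (i:ℕ)) (T - (j:ℕ)) := by omega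
  have h2 : max ((i:ℕ)+1) ((j:ℕ)+1) - min ((i:ℕ)+1) ((j:ℕ)+1)
      = max (T - (i:ℕ)) (T - (j:ℕ)) - min (T - (i:ℕ)) (T - (j:ℕ)) := by omega
  rw [h1, h2, Fo]

end ConnAux

open ConnAux in
/-- All statements at a single level `T ≥ 1`. -/
theorem connecting_key (b : ℕ → ℝ) (T : ℕ) :
    (Matrix.of fun i j : Fin T => Cmat (resp b) T ((i : ℕ) + 1) ((j : ℕ) + 1)).IsSymm ∧
    (Matrix.of fun i j : Fin T => Cmat (resp b) T ((i : ℕ) + 1) ((j : ℕ) + 1)).PosDef ∧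
    (Matrix.of fun i j : Fin T => Cmat (resp b) T ((i : ℕ) + 1) ((j : ℕ) + 1)).det = 1 := by
  rw [M_eq b T]
  refine ⟨?_, ?_, ?_⟩
  · exact (Matrix.isSymm_mul_transpose_self (A b T)).submatrix _
  · exact posDef_submatrix (posDef_N b T) Fin.revPerm
  · rw [Matrix.det_submatrix_equiv_self, Matrix.det_mul, Matrix.det_transpose, A_det b T]
    norm_num

/-- The connecting matrix is symmetric and positive definite, with all leading connecting
matrices of unit determinant. -/
theorem connecting_posdef_det_one (b : ℕ → ℝ) (T : ℕ) (hT : 1 ≤ T) :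
    (Matrix.of fun i j : Fin T => Cmat (resp b) T ((i : ℕ) + 1) ((j : ℕ) + 1)).IsSymm ∧
    (Matrix.of fun i j : Fin T => Cmat (resp b) T ((i : ℕ) + 1) ((j : ℕ) + 1)).PosDef ∧
    (∀ l, 1 ≤ l → l ≤ T →
      (Matrix.of fun i j : Fin l => Cmat (resp b) l ((i : ℕ) + 1) ((j : ℕ) + 1)).det = 1) := by
  refine ⟨(connecting_key b T).1, (connecting_key b T).2.1, fun l _ _ => (connecting_key b l).2.2⟩
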